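/- For every k > 0 and every Schwartz function u : ℝ → ℂ, one has the exact identity Re ∬_{{(x,y) ∈ ℝ² : y ≥ x}} e^{−2k(y−x)} u(y) \overline{u(x)} dy dx = ∫_ℝ 2k |û(ξ)|² / (4k² + ξ²) dξ. In particular this quantity is comparable (with k-dependent constants) to the squared H^{−1}-norm ∫ (1+ξ²)^{−1}|û(ξ)|² dξ. (This double integral is the trace of the operator (k−∂)^{−1} u (k+∂)^{−1} ū.) -/

import Mathlib

open MeasureTheory

/-- Fourier transform with normalization `û(ξ) = (2π)^{-1/2} ∫ e^{-ixξ} u(x) dx`. -/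
noncomputable def ft (f : ℝ → ℂ) (ξ : ℝ) : ℂ :=
  (((2 * Real.pi) ^ (-(1 : ℝ) / 2) : ℝ) : ℂ) *
    ∫ x : ℝ, Complex.exp (-Complex.I * x * ξ) * f x

open Complex FourierTransform Real SchwartzMap
open scoped Real

lemma exp_integral_Ioi (c : ℂ) (hc : 0 < c.re) :
    ∫ s in Set.Ioi (0:ℝ), Complex.exp (-(c * s)) = 1 / c := by
  have hc0 : c ≠ 0 := fun h => by simp [h] at hc
  have key : ∀ x ∈ Set.Ici (0:ℝ), HasDerivAt (fun s : ℝ => -c⁻¹ * Complex.exp (-(c * s)))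
      (Complex.exp (-(c * x))) x := by
    intro x _
    have h1 : HasDerivAt (fun s : ℝ => -(c * (s:ℂ))) (-c) x := by
      have h := ((hasDerivAt_id (x:ℝ)).ofReal_comp.const_mul c).neg
      simp at h
      exact h
    have h2 := (h1.cexp).const_mul (-c⁻¹)
    rw [mul_comm (cexp _) (-c), ← mul_assoc, neg_mul_neg, inv_mul_cancel₀ hc0, one_mul] at h2
    exact h2
  have hint : IntegrableOn (fun s : ℝ => Complex.exp (-(c * s))) (Set.Ioi 0) := by
    have : IntegrableOn (fun s : ℝ => Real.exp (-c.re * s)) (Set.Ioi (0:ℝ)) :=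
      exp_neg_integrableOn_Ioi 0 hc
    apply this.integrable.mono
    · apply Continuous.aestronglyMeasurable; fun_prop
    · filter_upwards with s
      simp only [Complex.norm_exp]
      simp [Real.norm_eq_abs, Real.abs_exp, neg_mul]
  have htend : Filter.Tendsto (fun s : ℝ => -c⁻¹ * Complex.exp (-(c * s))) Filter.atTop (nhds 0) := by
    rw [show (0:ℂ) = -c⁻¹ * 0 by ring]
    apply Filter.Tendsto.const_mul
    rw [tendsto_zero_iff_norm_tendsto_zero]
    have : ∀ s : ℝ, ‖Complex.exp (-(c * s))‖ = Real.exp (-c.re * s) := by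
      intro s; simp [Complex.norm_exp, neg_mul]
    simp only [this]
    have h3 : Filter.Tendsto (fun s : ℝ => -c.re * s) Filter.atTop Filter.atBot := by
      have h := Filter.tendsto_neg_atTop_atBot.comp ((Filter.tendsto_id (α := ℝ)).const_mul_atTop hc)
      exact h.congr (fun s => by simp [neg_mul])
    exact Real.tendsto_exp_atBot.comp h3
  have := integral_Ioi_of_hasDerivAt_of_tendsto' (a := 0) key hint htend
  rw [this]
  simp [hc0]

lemma fourierIntegral_real_eq_mul (f : ℝ → ℂ) (w : ℝ) :
    𝓕 f w = ∫ x : ℝ, Complex.exp (-Complex.I * x * (2*π*w)) * f x := by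
  rw [Real.fourier_eq']
  congr 1; ext x
  rw [smul_eq_mul]
  congr 1
  · congr 1
    push_cast [RCLike.inner_apply, starRingEnd_apply, star_trivial]
    ring

lemma ft_eq_fourierIntegral (f : ℝ → ℂ) (ξ : ℝ) :
    ft f ξ = (((2 * Real.pi) ^ (-(1 : ℝ) / 2) : ℝ) : ℂ) * 𝓕 f (ξ / (2*π)) := by
  rw [ft, fourierIntegral_real_eq_mul]
  congr 2
  ext x
  congr 2
  push_cast
  have hπ : (π:ℂ) ≠ 0 := Complex.ofReal_ne_zero.2 Real.pi_ne_zero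
  field_simp

lemma fourier_flip_eq (g : ℝ → ℂ) :
    VectorFourier.fourierIntegral 𝐞 volume (innerₗ ℝ).flip g = 𝓕 g := by
  ext x
  rw [Real.fourier_eq, VectorFourier.fourierIntegral]
  congr 1; ext ξ
  congr 2
  simp [LinearMap.flip_apply, real_inner_comm]

lemma fourier_conj (g : ℝ → ℂ) (x : ℝ) :
    𝓕 (fun t => (starRingEnd ℂ) (g t)) x = (starRingEnd ℂ) (𝓕⁻ g x) := by
  rw [Real.fourier_eq, Real.fourierInv_eq, ← integral_conj]
  congr 1; ext t
  simp only [Circle.smul_def, Real.fourierChar_apply, smul_eq_mul]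
  rw [map_mul, ← Complex.exp_conj]
  congr 2
  simp only [map_mul, Complex.conj_I, Complex.conj_ofReal]
  push_cast
  ring

lemma parseval_shift (u : SchwartzMap ℝ ℂ) (s : ℝ) :
    ∫ x : ℝ, u (x + s) * (starRingEnd ℂ) (u x)
      = ∫ ξ : ℝ, (𝐞 (s * ξ) : ℂ) * ((‖𝓕 (⇑u) ξ‖^2 : ℝ) : ℂ) := by
  set v : SchwartzMap ℝ ℂ := FourierTransform.fourierCLE ℂ (SchwartzMap ℝ ℂ) u with hv
  have hvc : ⇑v = 𝓕 ⇑u := rfl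
  have hu_int : Integrable (⇑u) := u.integrable
  have hv_int : Integrable (𝓕 ⇑u) := hvc ▸ v.integrable
  have hf_int : Integrable (fun x => u (x + s)) := hu_int.comp_add_right s
  have hg_int : Integrable (fun ξ => (starRingEnd ℂ) (𝓕 (⇑u) ξ)) := by
    rw [← hvc]; exact (Complex.conjCLE.toContinuousLinearMap.integrable_comp v.integrable)
  have mult := VectorFourier.integral_fourierIntegral_smul_eq_flip (F := ℂ)
      (L := innerₗ ℝ) (μ := (volume : Measure ℝ)) (ν := (volume : Measure ℝ))
      Real.continuous_fourierChar continuous_inner hf_int hg_int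
  -- identify both sides
  have lhs_eq : ∀ ξ : ℝ, (VectorFourier.fourierIntegral 𝐞 volume (innerₗ ℝ)
        (fun x => u (x + s)) ξ) • ((starRingEnd ℂ) (𝓕 (⇑u) ξ))
      = (𝐞 (s * ξ) : ℂ) * ((‖𝓕 (⇑u) ξ‖^2 : ℝ) : ℂ) := by
    intro ξ
    have : VectorFourier.fourierIntegral 𝐞 volume (innerₗ ℝ) (fun x => u (x + s)) ξ
        = (𝐞 (s * ξ) : ℂ) * 𝓕 (⇑u) ξ := by
      have := VectorFourier.fourierIntegral_comp_add_right 𝐞 (volume : Measure ℝ)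
        (innerₗ ℝ) (⇑u) s
      have h2 := congrFun this ξ
      simp only [Circle.smul_def, mul_comm s ξ] at h2 ⊢
      exact h2
    rw [this, smul_eq_mul, mul_assoc]
    congr 1
    rw [Complex.mul_conj]
    norm_cast
    rw [← Complex.sq_norm]
  have rhs_eq : ∀ x : ℝ, (fun x => u (x + s)) x •
        (VectorFourier.fourierIntegral 𝐞 volume (innerₗ ℝ).flip
          (fun ξ => (starRingEnd ℂ) (𝓕 (⇑u) ξ)) x)
      = u (x + s) * (starRingEnd ℂ) (u x) := by
    intro x
    have h1 : VectorFourier.fourierIntegral 𝐞 volume (innerₗ ℝ).flip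
          (fun ξ => (starRingEnd ℂ) (𝓕 (⇑u) ξ)) x
        = 𝓕 (fun ξ => (starRingEnd ℂ) (𝓕 (⇑u) ξ)) x := by
      rw [fourier_flip_eq]
    rw [h1, fourier_conj, u.continuous.fourierInv_fourier_eq hu_int hv_int, smul_eq_mul]
  calc ∫ x : ℝ, u (x + s) * (starRingEnd ℂ) (u x)
      = ∫ x : ℝ, (fun x => u (x + s)) x •
          (VectorFourier.fourierIntegral 𝐞 volume (innerₗ ℝ).flip
            (fun ξ => (starRingEnd ℂ) (𝓕 (⇑u) ξ)) x) := by
        congr 1; ext x; rw [rhs_eq]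
    _ = ∫ ξ : ℝ, (VectorFourier.fourierIntegral 𝐞 volume (innerₗ ℝ)
          (fun x => u (x + s)) ξ) • ((starRingEnd ℂ) (𝓕 (⇑u) ξ)) := mult.symm
    _ = ∫ ξ : ℝ, (𝐞 (s * ξ) : ℂ) * ((‖𝓕 (⇑u) ξ‖^2 : ℝ) : ℂ) := by
        congr 1; ext ξ; rw [lhs_eq]

lemma exp_bound_aux (u : SchwartzMap ℝ ℂ) : ∀ y : ℝ, ‖u y‖ ≤ (SchwartzMap.seminorm ℝ 0 0) u :=
  fun y => SchwartzMap.norm_le_seminorm ℝ u y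

lemma norm_sq_integrable (u : SchwartzMap ℝ ℂ) :
    Integrable (fun ξ : ℝ => ‖𝓕 (⇑u) ξ‖^2) := by
  set v : SchwartzMap ℝ ℂ := FourierTransform.fourierCLE ℂ (SchwartzMap ℝ ℂ) u with hv
  have hvc : ⇑v = 𝓕 ⇑u := rfl
  rw [← hvc]
  apply (v.integrable.norm.const_mul ((SchwartzMap.seminorm ℝ 0 0) v)).mono'
  · exact (v.continuous.norm.pow 2).aestronglyMeasurable
  · filter_upwards with ξ
    rw [Real.norm_eq_abs, _root_.abs_of_nonneg (by positivity : (0:ℝ) ≤ ‖v ξ‖^2), pow_two]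
    exact mul_le_mul_of_nonneg_right (exp_bound_aux v ξ) (norm_nonneg _)

lemma key_identity (k : ℝ) (hk : 0 < k) (u : SchwartzMap ℝ ℂ) :
    ∫ x : ℝ, ∫ y in Set.Ici x,
        ((Real.exp (-2 * k * (y - x)) : ℝ) : ℂ) * u y * (starRingEnd ℂ) (u x)
      = ∫ ξ : ℝ, ((‖𝓕 (⇑u) ξ‖^2 : ℝ) : ℂ) * (1 / (((2*k : ℝ) : ℂ) - ((2*π*ξ : ℝ) : ℂ) * Complex.I)) := by
  set M : ℝ := (SchwartzMap.seminorm ℝ 0 0) u with hM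
  have hexp : Integrable (fun s : ℝ => Real.exp (-(2*k) * s)) (volume.restrict (Set.Ici 0)) := by
    rw [← IntegrableOn, integrableOn_Ici_iff_integrableOn_Ioi]
    exact exp_neg_integrableOn_Ioi 0 (by linarith)
  -- Step A: translate inner integral
  have stepA : ∀ x : ℝ, (∫ y in Set.Ici x,
        ((Real.exp (-2 * k * (y - x)) : ℝ) : ℂ) * u y * (starRingEnd ℂ) (u x))
      = ∫ s in Set.Ici (0:ℝ), ((Real.exp (-2 * k * s) : ℝ) : ℂ) * u (x + s) * (starRingEnd ℂ) (u x) := by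
    intro x
    have hmp : MeasurePreserving (fun s : ℝ => x + s) volume volume :=
      measurePreserving_add_left volume x
    have hemb : MeasurableEmbedding (fun s : ℝ => x + s) :=
      (Homeomorph.addLeft x).isClosedEmbedding.measurableEmbedding
    have hpre : (fun s : ℝ => x + s) ⁻¹' (Set.Ici x) = Set.Ici 0 := by
      ext s; simp
    have := hmp.setIntegral_preimage_emb hemb
      (fun y => ((Real.exp (-2 * k * (y - x)) : ℝ) : ℂ) * u y * (starRingEnd ℂ) (u x)) (Set.Ici x)
    rw [hpre] at this
    rw [← this]
    congr 1; ext s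
    congr 3
    ring_nf
  simp_rw [stepA]
  -- Step B: Fubini swap
  have hcont : Continuous (fun p : ℝ × ℝ =>
      ((Real.exp (-2 * k * p.2) : ℝ) : ℂ) * u (p.1 + p.2) * (starRingEnd ℂ) (u p.1)) := by
    apply Continuous.mul
    apply Continuous.mul
    · fun_prop
    · fun_prop
    · exact Complex.continuous_conj.comp (u.continuous.comp continuous_fst)
  have hIntProd : Integrable (Function.uncurry (fun x s =>
      ((Real.exp (-2 * k * s) : ℝ) : ℂ) * u (x + s) * (starRingEnd ℂ) (u x)))
      (volume.prod (volume.restrict (Set.Ici 0))) := by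
    apply (((u.integrable.norm.const_mul M).mul_prod hexp).mono'
      hcont.aestronglyMeasurable)
    filter_upwards with p
    show ‖((Real.exp (-2 * k * p.2) : ℝ) : ℂ) * u (p.1 + p.2) * (starRingEnd ℂ) (u p.1)‖
      ≤ M * ‖u p.1‖ * Real.exp (-(2*k) * p.2)
    rw [norm_mul, norm_mul]
    have h1 : ‖u (p.1 + p.2)‖ ≤ M := exp_bound_aux u _
    have h3 : ‖(starRingEnd ℂ) (u p.1)‖ = ‖u p.1‖ := RCLike.norm_conj _
    have h4 : ‖((Real.exp (-2 * k * p.2) : ℝ) : ℂ)‖ = Real.exp (-(2*k)*p.2) := by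
      rw [Complex.norm_real, Real.norm_eq_abs, Real.abs_exp]
      ring_nf
    rw [h3, h4]
    nlinarith [mul_le_mul_of_nonneg_right (mul_le_mul_of_nonneg_right h1 (norm_nonneg (u p.1)))
      (Real.exp_pos (-(2*k)*p.2)).le]
  rw [integral_integral_swap hIntProd]
  -- Step C: apply Parseval for each s
  have stepC : ∀ s : ℝ, (∫ x : ℝ, ((Real.exp (-2 * k * s) : ℝ) : ℂ) * u (x + s) * (starRingEnd ℂ) (u x))
      = ((Real.exp (-2 * k * s) : ℝ) : ℂ) *
          ∫ ξ : ℝ, (𝐞 (s * ξ) : ℂ) * ((‖𝓕 (⇑u) ξ‖^2 : ℝ) : ℂ) := by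
    intro s
    rw [← parseval_shift u s, ← integral_const_mul]
    congr 1; ext x; ring
  simp_rw [stepC]
  -- rewrite kernel as single complex exponential
  have hker : ∀ s ξ : ℝ, ((Real.exp (-2*k*s) : ℝ):ℂ) * ((𝐞 (s*ξ) : ℂ) * ((‖𝓕 (⇑u) ξ‖^2 : ℝ):ℂ))
      = Complex.exp (-((((2*k : ℝ):ℂ) - ((2*π*ξ : ℝ):ℂ) * Complex.I) * s)) * ((‖𝓕 (⇑u) ξ‖^2 : ℝ):ℂ) := by
    intro s ξ
    rw [Real.fourierChar_apply, Complex.ofReal_exp, ← mul_assoc, ← Complex.exp_add]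
    congr 2
    push_cast
    ring
  simp_rw [← integral_const_mul, hker]
  -- Fubini 2
  have hcont2 : Continuous (fun p : ℝ × ℝ =>
      Complex.exp (-((((2*k : ℝ):ℂ) - ((2*π*p.2 : ℝ):ℂ) * Complex.I) * p.1)) * ((‖𝓕 (⇑u) p.2‖^2 : ℝ):ℂ)) := by
    apply Continuous.mul
    · apply Complex.continuous_exp.comp
      fun_prop
    · apply Complex.continuous_ofReal.comp
      have : Continuous (𝓕 (⇑u)) := by
        have : ⇑(FourierTransform.fourierCLE ℂ (SchwartzMap ℝ ℂ) u) = 𝓕 ⇑u := rfl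
        rw [← this]; exact (FourierTransform.fourierCLE ℂ (SchwartzMap ℝ ℂ) u).continuous
      fun_prop
  have hIntProd2 : Integrable (Function.uncurry (fun (s ξ : ℝ) =>
      Complex.exp (-((((2*k : ℝ):ℂ) - ((2*π*ξ : ℝ):ℂ) * Complex.I) * s)) * ((‖𝓕 (⇑u) ξ‖^2 : ℝ):ℂ)))
      ((volume.restrict (Set.Ici 0)).prod volume) := by
    have huncurry : (Function.uncurry (fun (s ξ : ℝ) =>
        Complex.exp (-((((2*k : ℝ):ℂ) - ((2*π*ξ : ℝ):ℂ) * Complex.I) * s)) * ((‖𝓕 (⇑u) ξ‖^2 : ℝ):ℂ)))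
        = (fun p : ℝ × ℝ =>
        Complex.exp (-((((2*k : ℝ):ℂ) - ((2*π*p.2 : ℝ):ℂ) * Complex.I) * p.1)) * ((‖𝓕 (⇑u) p.2‖^2 : ℝ):ℂ)) := rfl
    rw [huncurry]
    apply (hexp.mul_prod (norm_sq_integrable u)).mono' hcont2.aestronglyMeasurable
    filter_upwards with p
    show ‖Complex.exp (-((((2*k : ℝ):ℂ) - ((2*π*p.2 : ℝ):ℂ) * Complex.I) * p.1)) * ((‖𝓕 (⇑u) p.2‖^2 : ℝ):ℂ)‖
      ≤ Real.exp (-(2*k) * p.1) * ‖𝓕 (⇑u) p.2‖^2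
    rw [norm_mul, Complex.norm_exp]
    have hre : (-((((2*k : ℝ):ℂ) - ((2*π*p.2 : ℝ):ℂ) * Complex.I) * p.1)).re = -(2*k) * p.1 := by
      simp [Complex.mul_re]
      try ring
    rw [hre]
    rw [Complex.norm_real, Real.norm_eq_abs, _root_.abs_of_nonneg (by positivity : (0:ℝ) ≤ ‖𝓕 (⇑u) p.2‖^2)]
  rw [integral_integral_swap hIntProd2]
  -- inner integral over s
  congr 1; ext ξ
  rw [integral_mul_const, integral_Ici_eq_integral_Ioi]
  rw [exp_integral_Ioi _ (by simp; linarith : (0:ℝ) < ((((2*k : ℝ):ℂ) - ((2*π*ξ : ℝ):ℂ) * Complex.I)).re)]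
  ring

lemma ft_norm_sq (u : SchwartzMap ℝ ℂ) (ξ : ℝ) :
    ‖ft (⇑u) ξ‖^2 = (2*π)⁻¹ * ‖𝓕 (⇑u) (ξ/(2*π))‖^2 := by
  rw [ft_eq_fourierIntegral, norm_mul, mul_pow, Complex.norm_real, Real.norm_eq_abs,
    _root_.abs_of_nonneg (Real.rpow_nonneg (by positivity) _), ← Real.rpow_natCast _ 2,
    ← Real.rpow_mul (by positivity)]
  rw [show (-(1:ℝ)/2 * ((2:ℕ):ℝ) : ℝ) = -1 by push_cast; ring, Real.rpow_neg_one]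

lemma re_identity (k : ℝ) (hk : 0 < k) (u : SchwartzMap ℝ ℂ) :
    (∫ x : ℝ, ∫ y in Set.Ici x,
        ((Real.exp (-2 * k * (y - x)) : ℝ) : ℂ) * u y * (starRingEnd ℂ) (u x)).re
      = ∫ ξ : ℝ, ‖𝓕 (⇑u) ξ‖^2 * (2*k / ((2*k)^2 + (2*π*ξ)^2)) := by
  rw [key_identity k hk u]
  have hcont_v : Continuous (𝓕 (⇑u)) := by
    have h : ⇑(FourierTransform.fourierCLE ℂ (SchwartzMap ℝ ℂ) u) = 𝓕 ⇑u := rfl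
    rw [← h]; exact (FourierTransform.fourierCLE ℂ (SchwartzMap ℝ ℂ) u).continuous
  have hcne : ∀ ξ : ℝ, (((2*k : ℝ):ℂ) - ((2*π*ξ : ℝ):ℂ) * Complex.I) ≠ 0 := by
    intro ξ h
    have := congrArg Complex.re h
    simp at this
    linarith
  have hInt : Integrable (fun ξ : ℝ => ((‖𝓕 (⇑u) ξ‖^2 : ℝ):ℂ) *
      (1 / (((2*k : ℝ):ℂ) - ((2*π*ξ : ℝ):ℂ) * Complex.I))) := by
    apply ((norm_sq_integrable u).mul_const (2*k)⁻¹).mono'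
    · apply Continuous.aestronglyMeasurable
      apply Continuous.mul
      · fun_prop
      · exact continuous_const.div (by fun_prop) hcne
    · filter_upwards with ξ
      rw [norm_mul, Complex.norm_real, Real.norm_eq_abs,
        _root_.abs_of_nonneg (by positivity : (0:ℝ) ≤ ‖𝓕 (⇑u) ξ‖^2)]
      apply mul_le_mul_of_nonneg_left _ (by positivity)
      rw [norm_div, norm_one, div_eq_mul_inv, one_mul]
      apply inv_anti₀ (by linarith)
      calc 2*k = (((2*k : ℝ):ℂ) - ((2*π*ξ : ℝ):ℂ) * Complex.I).re := by simp
        _ ≤ |(((2*k : ℝ):ℂ) - ((2*π*ξ : ℝ):ℂ) * Complex.I).re| := le_abs_self _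
        _ ≤ ‖((2*k : ℝ):ℂ) - ((2*π*ξ : ℝ):ℂ) * Complex.I‖ := Complex.abs_re_le_norm _
  have hre : (∫ ξ : ℝ, ((‖𝓕 (⇑u) ξ‖^2 : ℝ):ℂ) *
      (1 / (((2*k : ℝ):ℂ) - ((2*π*ξ : ℝ):ℂ) * Complex.I))).re
      = Complex.reCLM (∫ ξ : ℝ, ((‖𝓕 (⇑u) ξ‖^2 : ℝ):ℂ) *
      (1 / (((2*k : ℝ):ℂ) - ((2*π*ξ : ℝ):ℂ) * Complex.I))) := rfl
  rw [hre, ← Complex.reCLM.integral_comp_comm hInt]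
  congr 1; ext ξ
  show (((‖𝓕 (⇑u) ξ‖^2 : ℝ):ℂ) * (1 / (((2*k : ℝ):ℂ) - ((2*π*ξ : ℝ):ℂ) * Complex.I))).re
    = ‖𝓕 (⇑u) ξ‖^2 * (2*k / ((2*k)^2 + (2*π*ξ)^2))
  rw [Complex.re_ofReal_mul]
  congr 1
  rw [one_div, Complex.inv_re]
  congr 1
  · simp
  · rw [Complex.normSq_apply]
    simp
    ring

lemma rhs_translate (k : ℝ) (hk : 0 < k) (u : SchwartzMap ℝ ℂ) :
    (∫ ξ : ℝ, 2 * k * ‖ft (⇑u) ξ‖ ^ 2 / (4 * k ^ 2 + ξ ^ 2))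
      = ∫ ξ : ℝ, ‖𝓕 (⇑u) ξ‖^2 * (2*k / ((2*k)^2 + (2*π*ξ)^2)) := by
  set G : ℝ → ℝ := fun w => ‖𝓕 (⇑u) w‖^2 * (2*k / ((2*k)^2 + (2*π*w)^2)) with hG
  have h2π : (2*π) ≠ 0 := by positivity
  have hpt : ∀ ξ : ℝ, 2 * k * ‖ft (⇑u) ξ‖ ^ 2 / (4 * k ^ 2 + ξ ^ 2) = (2*π)⁻¹ * G (ξ/(2*π)) := by
    intro ξ
    rw [hG]
    simp only
    rw [ft_norm_sq u ξ, show 2*π*(ξ/(2*π)) = ξ by field_simp]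
    have h1 : (0:ℝ) < 4 * k ^ 2 + ξ ^ 2 := by positivity
    field_simp
    ring
  simp_rw [hpt]
  rw [integral_const_mul, MeasureTheory.Measure.integral_comp_div G (2*π), smul_eq_mul,
    _root_.abs_of_pos (by positivity : (0:ℝ) < 2*π), ← mul_assoc, inv_mul_cancel₀ h2π, one_mul]

theorem trace_identity (k : ℝ) (hk : 0 < k) :
    (∀ u : SchwartzMap ℝ ℂ,
      (∫ x : ℝ, ∫ y in Set.Ici x,
          ((Real.exp (-2 * k * (y - x)) : ℝ) : ℂ) * u y * (starRingEnd ℂ) (u x)).re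
        = ∫ ξ : ℝ, 2 * k * ‖ft (fun x => u x) ξ‖ ^ 2 / (4 * k ^ 2 + ξ ^ 2)) ∧
    ∃ c C : ℝ, 0 < c ∧ 0 < C ∧ ∀ u : SchwartzMap ℝ ℂ,
      (c * ∫ ξ : ℝ, (1 + ξ ^ 2)⁻¹ * ‖ft (fun x => u x) ξ‖ ^ 2) ≤
          (∫ ξ : ℝ, 2 * k * ‖ft (fun x => u x) ξ‖ ^ 2 / (4 * k ^ 2 + ξ ^ 2)) ∧
        (∫ ξ : ℝ, 2 * k * ‖ft (fun x => u x) ξ‖ ^ 2 / (4 * k ^ 2 + ξ ^ 2)) ≤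
          C * ∫ ξ : ℝ, (1 + ξ ^ 2)⁻¹ * ‖ft (fun x => u x) ξ‖ ^ 2 := by
  have hkpos : (0:ℝ) < 2*k := by linarith
  constructor
  · intro u
    rw [re_identity k hk u, rhs_translate k hk u]
  · refine ⟨min (2*k) (1/(2*k)), max (2*k) (1/(2*k)),
      lt_min hkpos (by positivity), lt_of_lt_of_le hkpos (le_max_left _ _), ?_⟩
    intro u
    set c := min (2*k) (1/(2*k)) with hc
    set C := max (2*k) (1/(2*k)) with hC
    set v : SchwartzMap ℝ ℂ := FourierTransform.fourierCLE ℂ (SchwartzMap ℝ ℂ) u with hv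
    have hvc : ⇑v = 𝓕 ⇑u := rfl
    set M : ℝ := (SchwartzMap.seminorm ℝ 0 0) v with hMdef
    set B : ℝ := (2*π)⁻¹ * M^2 with hB
    have hA_cont : Continuous fun ξ : ℝ => ‖ft (⇑u) ξ‖^2 := by
      have h : (fun ξ : ℝ => ‖ft (⇑u) ξ‖^2) = fun ξ => (2*π)⁻¹ * ‖𝓕 (⇑u) (ξ/(2*π))‖^2 :=
        funext (ft_norm_sq u)
      rw [h, ← hvc]
      have := v.continuous
      fun_prop
    have hA_bdd : ∀ ξ : ℝ, ‖ft (⇑u) ξ‖^2 ≤ B := by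
      intro ξ
      rw [ft_norm_sq u ξ, hB, ← hvc]
      apply mul_le_mul_of_nonneg_left _ (by positivity)
      rw [pow_two, pow_two]
      exact mul_le_mul (exp_bound_aux v _) (exp_bound_aux v _) (norm_nonneg _)
        ((norm_nonneg _).trans (exp_bound_aux v 0))
    have hA_nonneg : ∀ ξ : ℝ, (0:ℝ) ≤ ‖ft (⇑u) ξ‖^2 := fun ξ => by positivity
    have hfrac_le : ∀ ξ : ℝ, 2*k/(4*k^2+ξ^2) ≤ C/(1+ξ^2) := by
      intro ξ
      rw [div_le_div_iff₀ (by positivity) (by positivity)]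
      have h1 : 2*k ≤ C := le_max_left _ _
      have h2 : 1/(2*k) ≤ C := le_max_right _ _
      have h3 : 2*k ≤ C*(4*k^2) := by
        calc 2*k = 1/(2*k)*(4*k^2) := by field_simp; ring
          _ ≤ C*(4*k^2) := mul_le_mul_of_nonneg_right h2 (by positivity)
      nlinarith [mul_le_mul_of_nonneg_right h1 (sq_nonneg ξ)]
    have hfrac_ge : ∀ ξ : ℝ, c/(1+ξ^2) ≤ 2*k/(4*k^2+ξ^2) := by
      intro ξ
      rw [div_le_div_iff₀ (by positivity) (by positivity)]
      have h1 : c ≤ 2*k := min_le_left _ _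
      have h2 : c ≤ 1/(2*k) := min_le_right _ _
      have h3 : c*(4*k^2) ≤ 2*k := by
        calc c*(4*k^2) ≤ 1/(2*k)*(4*k^2) := mul_le_mul_of_nonneg_right h2 (by positivity)
          _ = 2*k := by field_simp; ring
      nlinarith [mul_le_mul_of_nonneg_right h1 (sq_nonneg ξ)]
    have hf2 : Integrable (fun ξ : ℝ => (1 + ξ ^ 2)⁻¹ * ‖ft (⇑u) ξ‖ ^ 2) := by
      apply (integrable_inv_one_add_sq.const_mul B).mono'
      · refine (Continuous.mul (Continuous.inv₀ (by fun_prop) (fun ξ => by positivity)) hA_cont).aestronglyMeasurable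
      · filter_upwards with ξ
        rw [Real.norm_eq_abs, _root_.abs_of_nonneg (by positivity)]
        calc (1 + ξ ^ 2)⁻¹ * ‖ft (⇑u) ξ‖ ^ 2 ≤ (1 + ξ ^ 2)⁻¹ * B :=
            mul_le_mul_of_nonneg_left (hA_bdd ξ) (by positivity)
          _ = B * (1 + ξ^2)⁻¹ := by ring
    have hf1 : Integrable (fun ξ : ℝ => 2 * k * ‖ft (⇑u) ξ‖ ^ 2 / (4 * k ^ 2 + ξ ^ 2)) := by
      apply (integrable_inv_one_add_sq.const_mul (C*B)).mono'
      · apply Continuous.aestronglyMeasurable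
        apply Continuous.div (by fun_prop) (by fun_prop)
        intro ξ; positivity
      · filter_upwards with ξ
        rw [Real.norm_eq_abs, _root_.abs_of_nonneg (by positivity)]
        calc 2 * k * ‖ft (⇑u) ξ‖ ^ 2 / (4 * k ^ 2 + ξ ^ 2)
            = ‖ft (⇑u) ξ‖ ^ 2 * (2*k/(4*k^2+ξ^2)) := by ring
          _ ≤ ‖ft (⇑u) ξ‖ ^ 2 * (C/(1+ξ^2)) :=
            mul_le_mul_of_nonneg_left (hfrac_le ξ) (hA_nonneg ξ)
          _ ≤ B * (C/(1+ξ^2)) :=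
            mul_le_mul_of_nonneg_right (hA_bdd ξ) (by positivity)
          _ = C * B * (1+ξ^2)⁻¹ := by ring
    constructor
    · rw [← integral_const_mul]
      apply integral_mono (hf2.const_mul c) hf1
      intro ξ
      show c * ((1 + ξ ^ 2)⁻¹ * ‖ft (⇑u) ξ‖ ^ 2) ≤ 2 * k * ‖ft (⇑u) ξ‖ ^ 2 / (4 * k ^ 2 + ξ ^ 2)
      calc c * ((1 + ξ ^ 2)⁻¹ * ‖ft (⇑u) ξ‖ ^ 2) = ‖ft (⇑u) ξ‖ ^ 2 * (c/(1+ξ^2)) := by ring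
        _ ≤ ‖ft (⇑u) ξ‖ ^ 2 * (2*k/(4*k^2+ξ^2)) :=
          mul_le_mul_of_nonneg_left (hfrac_ge ξ) (hA_nonneg ξ)
        _ = 2 * k * ‖ft (⇑u) ξ‖ ^ 2 / (4 * k ^ 2 + ξ ^ 2) := by ring
    · rw [← integral_const_mul]
      apply integral_mono hf1 (hf2.const_mul C)
      intro ξ
      show 2 * k * ‖ft (⇑u) ξ‖ ^ 2 / (4 * k ^ 2 + ξ ^ 2) ≤ C * ((1 + ξ ^ 2)⁻¹ * ‖ft (⇑u) ξ‖ ^ 2)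
      calc 2 * k * ‖ft (⇑u) ξ‖ ^ 2 / (4 * k ^ 2 + ξ ^ 2)
          = ‖ft (⇑u) ξ‖ ^ 2 * (2*k/(4*k^2+ξ^2)) := by ring
        _ ≤ ‖ft (⇑u) ξ‖ ^ 2 * (C/(1+ξ^2)) :=
          mul_le_mul_of_nonneg_left (hfrac_le ξ) (hA_nonneg ξ)
        _ = C * ((1 + ξ ^ 2)⁻¹ * ‖ft (⇑u) ξ‖ ^ 2) := by ring
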